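/- arXiv:1812.06039 — 4 statements merged into one kernel-verified Lean document; each statement's English description precedes it below -/
import Mathlib

section
/- Let σ_ρ be a {1,2}-valued random variable with P(σ_ρ=1)=π₁ ∈ (0,1), π₂ = 1 - π₁, and let X₁ = P(σ_ρ = 1 | 𝒢) for a σ-algebra 𝒢. Define x = E[X₁ | σ_ρ=1] - π₁ and z = E[(X₁ - π₁)² | σ_ρ = 1]. Then x = E[(X₁-π₁)² | σ_ρ=1] + (π₂/π₁)·E[((1-X₁) - π₂)² | σ_ρ=2], and in particular 0 ≤ z ≤ x. -/
open MeasureTheory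

theorem posterior_variance_decomposition
    {Ω : Type*} [m : MeasurableSpace Ω] (μ : Measure Ω) [IsProbabilityMeasure μ]
    (σρ : Ω → ℕ) (hσ : Measurable σρ) (hvals : ∀ ω, σρ ω = 1 ∨ σρ ω = 2)
    (A B : Set Ω) (hA : A = {ω | σρ ω = 1}) (hB : B = {ω | σρ ω = 2})
    (π₁ π₂ : ℝ) (hπ₁ : π₁ ∈ Set.Ioo (0:ℝ) 1) (hπ₂ : π₂ = 1 - π₁)
    (hμA : (μ A).toReal = π₁)
    (𝒢 : MeasurableSpace Ω) (h𝒢 : 𝒢 ≤ m)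
    (X₁ : Ω → ℝ) (hrange : ∀ ω, X₁ ω ∈ Set.Icc (0:ℝ) 1)
    (hX : X₁ =ᵐ[μ] μ[A.indicator (fun _ => (1:ℝ)) | 𝒢])
    (x z : ℝ)
    (hx : x = (∫ ω in A, X₁ ω ∂μ) / π₁ - π₁)
    (hz : z = (∫ ω in A, (X₁ ω - π₁)^2 ∂μ) / π₁) :
    x = (∫ ω in A, (X₁ ω - π₁)^2 ∂μ) / π₁ +
        (π₂ / π₁) * ((∫ ω in B, ((1 - X₁ ω) - π₂)^2 ∂μ) / π₂) ∧
    0 ≤ z ∧ z ≤ x := by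
  letI : MeasurableSpace Ω := m
  obtain ⟨hπ₁pos, hπ₁lt⟩ := hπ₁
  have hπ₂pos : 0 < π₂ := by rw [hπ₂]; linarith
  have hAm : MeasurableSet[m] A := by rw [hA]; exact hσ (measurableSet_singleton 1)
  have hBm : MeasurableSet[m] B := by rw [hB]; exact hσ (measurableSet_singleton 2)
  have hBA : B = Aᶜ := by
    ext ω
    rcases hvals ω with h | h <;> simp [hA, hB, h]
  set ind : Ω → ℝ := A.indicator (fun _ => 1) with hind
  have hindInt : Integrable ind μ := (integrable_const (1:ℝ)).indicator hAm
  set Y : Ω → ℝ := μ[ind|𝒢] with hYdef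
  have hXY : X₁ =ᵐ[μ] Y := hX
  have hYsm : StronglyMeasurable[𝒢] Y := stronglyMeasurable_condExp
  have hYsm' : AEStronglyMeasurable Y μ := (hYsm.mono h𝒢).aestronglyMeasurable
  have hYbd : ∀ᵐ ω ∂μ, ‖Y ω‖ ≤ 1 := by
    filter_upwards [hXY] with ω h
    rw [← h]
    rcases hrange ω with ⟨h0, h1⟩
    rw [Real.norm_eq_abs, abs_le]; constructor <;> linarith
  have hYInt : Integrable Y μ := integrable_condExp
  have hYindInt : Integrable (fun ω => Y ω * ind ω) μ :=
    hindInt.bdd_mul hYsm' hYbd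
  -- pull-out property
  have hpull : μ[(fun ω => Y ω * ind ω)|𝒢] =ᵐ[μ] fun ω => Y ω * Y ω := by
    have h := condExp_stronglyMeasurable_mul_of_bound (μ := μ) h𝒢 hYsm hindInt 1 hYbd
    filter_upwards [h] with ω hω
    exact hω
  have hIA : ∫ ω, Y ω ∂μ = π₁ := by
    rw [hYdef, integral_condExp h𝒢]
    have : ∫ ω, ind ω ∂μ = (μ A).toReal := integral_indicator_one hAm
    rw [this, hμA]
  have e1 : ∫ ω, Y ω * ind ω ∂μ = ∫ ω, Y ω ^ 2 ∂μ := by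
    calc ∫ ω, Y ω * ind ω ∂μ = ∫ ω, (μ[(fun ω => Y ω * ind ω)|𝒢]) ω ∂μ :=
          (integral_condExp h𝒢).symm
      _ = ∫ ω, Y ω * Y ω ∂μ := integral_congr_ae hpull
      _ = ∫ ω, Y ω ^ 2 ∂μ := by simp [sq]
  have eind : ∫ ω, Y ω * ind ω ∂μ = ∫ ω in A, Y ω ∂μ := by
    have h : (fun ω => Y ω * ind ω) = A.indicator Y := by
      ext ω; by_cases h : ω ∈ A <;> simp [hind, h]
    rw [h]; exact integral_indicator hAm
  have hXA : ∫ ω in A, X₁ ω ∂μ = ∫ ω, Y ω ^ 2 ∂μ := by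
    rw [← e1, eind]
    exact integral_congr_ae (ae_restrict_of_ae hXY)
  -- integrability of squared deviations
  have hYsqInt : Integrable (fun ω => (Y ω - π₁) ^ 2) μ := by
    have h1 : Integrable (fun ω => (Y ω - π₁) * (Y ω - π₁)) μ := by
      refine (hYInt.sub (integrable_const π₁)).bdd_mul
        (hYsm'.sub aestronglyMeasurable_const) (c := 1 + |π₁|) ?_
      filter_upwards [hYbd] with ω h
      have h2 : ‖π₁‖ = |π₁| := Real.norm_eq_abs _
      have h3 := norm_sub_le (Y ω) π₁
      linarith
    simpa [sq] using h1
  have hsqInt : Integrable (fun ω => (X₁ ω - π₁) ^ 2) μ :=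
    hYsqInt.congr (by filter_upwards [hXY] with ω h; rw [h])
  -- total second moment J
  set J : ℝ := ∫ ω, (X₁ ω - π₁) ^ 2 ∂μ with hJdef
  have hJY : J = ∫ ω, (Y ω - π₁) ^ 2 ∂μ :=
    integral_congr_ae (by filter_upwards [hXY] with ω h; rw [h])
  have hY2Int : Integrable (fun ω => Y ω ^ 2) μ := by
    have : Integrable (fun ω => Y ω * Y ω) μ := hYInt.bdd_mul hYsm' hYbd
    simpa [sq] using this
  have hJval : J = (∫ ω, Y ω ^ 2 ∂μ) - π₁ ^ 2 := by
    rw [hJY]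
    have hexp : (fun ω => (Y ω - π₁) ^ 2)
        = fun ω => (Y ω ^ 2 - (2 * π₁) * Y ω) + π₁ ^ 2 := by
      ext ω; ring
    have hf : Integrable (fun ω => Y ω ^ 2 - (2 * π₁) * Y ω) μ :=
      hY2Int.sub (hYInt.const_mul _)
    rw [hexp, integral_add hf (integrable_const _),
      integral_sub hY2Int (hYInt.const_mul _), integral_const_mul, hIA,
      integral_const]
    simp
    ring
  -- decomposition over A and B
  set K : ℝ := ∫ ω in A, (X₁ ω - π₁) ^ 2 ∂μ with hKdef
  have hL : ∫ ω in B, ((1 - X₁ ω) - π₂) ^ 2 ∂μ = J - K := by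
    have h1 : ∫ ω in B, ((1 - X₁ ω) - π₂) ^ 2 ∂μ
        = ∫ ω in B, (X₁ ω - π₁) ^ 2 ∂μ := by
      refine integral_congr_ae (Filter.Eventually.of_forall fun ω => ?_)
      rw [hπ₂]; ring
    have h2 : K + ∫ ω in Aᶜ, (X₁ ω - π₁) ^ 2 ∂μ = J :=
      integral_add_compl hAm hsqInt
    rw [h1, hBA]
    linarith
  have hKnn : 0 ≤ K :=
    setIntegral_nonneg hAm fun ω _ => sq_nonneg _
  have hLnn : 0 ≤ ∫ ω in B, ((1 - X₁ ω) - π₂) ^ 2 ∂μ :=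
    setIntegral_nonneg hBm fun ω _ => sq_nonneg _
  have hxJ : x = J / π₁ := by
    rw [hx, hXA, hJval]
    field_simp
  have hKJ : K ≤ J := by linarith [hL, hLnn]
  refine ⟨?_, ?_, ?_⟩
  · rw [hxJ, hL]
    field_simp
    ring
  · rw [hz]
    exact div_nonneg hKnn hπ₁pos.le
  · rw [hz, hxJ]
    gcongr
end

section
/- Let a > 0 and for s > 0 let W_s ~ N(−as/2, as). Define g(s) = E[ 1/(1 + λ e^{W_s}) ] for a constant λ > 0. Then for 0 < s' ≤ s, g(s) ≥ g(s'). That is, g is nondecreasing on (0,∞). -/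
open MeasureTheory ProbabilityTheory Real
open scoped NNReal ENNReal

lemma my_integral_gaussianReal (m : ℝ) {v : ℝ≥0} (hv : v ≠ 0) (φ : ℝ → ℝ) :
    ∫ w, φ w ∂(gaussianReal m v) = ∫ w, gaussianPDFReal m v w * φ w := by
  rw [gaussianReal_of_var_ne_zero _ hv, gaussianPDF_def]
  have : (fun x => ENNReal.ofReal (gaussianPDFReal m v x))
      = fun x => ((gaussianPDFReal m v x).toNNReal : ℝ≥0∞) := rfl
  rw [this, integral_withDensity_eq_integral_smul
    ((measurable_gaussianPDFReal m v).real_toNNReal) φ]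
  congr 1
  ext w
  rw [NNReal.smul_def, smul_eq_mul, Real.coe_toNNReal _ (gaussianPDFReal_nonneg _ _ _)]

lemma exp_mul_pdf (m : ℝ) {v : ℝ≥0} (hv : v ≠ 0) (y : ℝ) :
    Real.exp y * gaussianPDFReal m v y
      = Real.exp (m + v / 2) * gaussianPDFReal (m + v) v y := by
  have hv' : (0:ℝ) < v := NNReal.coe_pos.mpr (pos_iff_ne_zero.mpr hv)
  simp only [gaussianPDFReal]
  rw [mul_left_comm, mul_left_comm (rexp (m + ↑v / 2)), ← Real.exp_add, ← Real.exp_add]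
  congr 2
  field_simp
  ring

lemma integrable_exp_mul_pdf (m : ℝ) {v : ℝ≥0} (hv : v ≠ 0) :
    Integrable (fun y => Real.exp y * gaussianPDFReal m v y) := by
  have : (fun y => Real.exp y * gaussianPDFReal m v y)
      = fun y => Real.exp (m + v / 2) * gaussianPDFReal (m + v) v y := by
    ext y; exact exp_mul_pdf m hv y
  rw [this]
  exact (integrable_gaussianPDFReal _ _).const_mul _

lemma integral_exp_mul_pdf (m : ℝ) {v : ℝ≥0} (hv : v ≠ 0) :
    ∫ y, Real.exp y * gaussianPDFReal m v y = Real.exp (m + v / 2) := by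
  simp_rw [exp_mul_pdf m hv]
  rw [integral_const_mul, integral_gaussianPDFReal_eq_one _ hv, mul_one]

lemma pdf_conv_pointwise (m₁ m₂ : ℝ) {v₁ v₂ : ℝ≥0} (hv₁ : v₁ ≠ 0) (hv₂ : v₂ ≠ 0)
    (w x : ℝ) :
    gaussianPDFReal m₁ v₁ x * gaussianPDFReal m₂ v₂ (w - x)
      = gaussianPDFReal (m₁ + m₂) (v₁ + v₂) w
        * gaussianPDFReal ((m₁ * v₂ + (w - m₂) * v₁) / (v₁ + v₂)) (v₁ * v₂ / (v₁ + v₂)) x := by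
  have hp : (0:ℝ) < v₁ := NNReal.coe_pos.mpr (pos_iff_ne_zero.mpr hv₁)
  have hq : (0:ℝ) < v₂ := NNReal.coe_pos.mpr (pos_iff_ne_zero.mpr hv₂)
  have hpq : (0:ℝ) < v₁ + v₂ := by positivity
  have h12 : ((v₁ + v₂ : ℝ≥0) : ℝ) = (v₁:ℝ) + v₂ := by push_cast; ring
  have h3 : ((v₁ * v₂ / (v₁ + v₂) : ℝ≥0) : ℝ) = (v₁:ℝ) * v₂ / ((v₁:ℝ) + v₂) := by
    push_cast; ring
  simp only [gaussianPDFReal, h12, h3]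
  rw [mul_mul_mul_comm, mul_mul_mul_comm (√(2 * π * ((v₁:ℝ) + v₂)))⁻¹]
  congr 1
  · rw [← mul_inv, ← mul_inv, ← Real.sqrt_mul (by positivity), ← Real.sqrt_mul (by positivity)]
    congr 2
    field_simp
  · rw [← Real.exp_add, ← Real.exp_add]
    congr 1
    field_simp
    ring

lemma pdf_conv (m₁ m₂ : ℝ) {v₁ v₂ : ℝ≥0} (hv₁ : v₁ ≠ 0) (hv₂ : v₂ ≠ 0) (w : ℝ) :
    ∫ x, gaussianPDFReal m₁ v₁ x * gaussianPDFReal m₂ v₂ (w - x)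
      = gaussianPDFReal (m₁ + m₂) (v₁ + v₂) w := by
  have hv₃ : (v₁ * v₂ / (v₁ + v₂) : ℝ≥0) ≠ 0 := by
    have hp : 0 < v₁ := pos_iff_ne_zero.mpr hv₁
    have hq : 0 < v₂ := pos_iff_ne_zero.mpr hv₂
    positivity
  simp_rw [pdf_conv_pointwise m₁ m₂ hv₁ hv₂ w]
  rw [integral_const_mul, integral_gaussianPDFReal_eq_one _ hv₃, mul_one]

-- pointwise convexity inequality
lemma jensen_pointwise {c t : ℝ} (hc : 0 < c) (ht : 0 < t) :
    1 / (1 + c) + (c - t) / (1 + c) ^ 2 ≤ 1 / (1 + t) := by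
  have h1 : (0:ℝ) < 1 + c := by linarith
  have h2 : (0:ℝ) < 1 + t := by linarith
  rw [div_add_div _ _ (by positivity) (by positivity), div_le_div_iff₀ (by positivity) h2]
  nlinarith [sq_nonneg (t - c), sq_nonneg (1 + c)]

theorem g_monotone (a l : ℝ) (ha : 0 < a) (hl : 0 < l)
    (g : ℝ → ℝ)
    (hg : ∀ s, g s = ∫ w, 1 / (1 + l * Real.exp w)
        ∂(gaussianReal (-(a*s)/2) (Real.toNNReal (a*s)))) :
    ∀ s' s : ℝ, 0 < s' → s' ≤ s → g s' ≤ g s := by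
  intro s' s hs' hss
  rcases eq_or_lt_of_le hss with rfl | hlt
  · exact le_rfl
  set f : ℝ → ℝ := fun w => 1 / (1 + l * Real.exp w) with hf
  have hfpos : ∀ w, 0 < f w := fun w => by
    have : 0 < 1 + l * Real.exp w := by positivity
    positivity
  have hfle : ∀ w, f w ≤ 1 := fun w => by
    have h1 : (0:ℝ) < 1 + l * Real.exp w := by positivity
    rw [hf, div_le_one h1]
    nlinarith [Real.exp_pos w]
  have hfm : Measurable f :=
    measurable_const.div (measurable_const.add (measurable_const.mul Real.measurable_exp))
  have hfnorm : ∀ w, ‖f w‖ ≤ 1 := fun w => by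
    rw [Real.norm_eq_abs, abs_of_pos (hfpos w)]; exact hfle w
  set m₁ : ℝ := -(a * s') / 2 with hm₁
  set m₂ : ℝ := -(a * (s - s')) / 2 with hm₂
  set v₁ : ℝ≥0 := Real.toNNReal (a * s') with hv₁def
  set v₂ : ℝ≥0 := Real.toNNReal (a * (s - s')) with hv₂def
  have h1pos : 0 < a * s' := by positivity
  have h2pos : 0 < a * (s - s') := by nlinarith
  have hv₁ : v₁ ≠ 0 := by
    rw [← pos_iff_ne_zero]; exact Real.toNNReal_pos.mpr h1pos
  have hv₂ : v₂ ≠ 0 := by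
    rw [← pos_iff_ne_zero]; exact Real.toNNReal_pos.mpr h2pos
  have hvsum : Real.toNNReal (a * s) = v₁ + v₂ := by
    rw [hv₁def, hv₂def, ← Real.toNNReal_add h1pos.le h2pos.le]
    congr 1; ring
  have hmsum : -(a * s) / 2 = m₁ + m₂ := by rw [hm₁, hm₂]; ring
  have hv₂coe : (v₂ : ℝ) = a * (s - s') := Real.coe_toNNReal _ h2pos.le
  have hpdf1nn : ∀ x, 0 ≤ gaussianPDFReal m₁ v₁ x := gaussianPDFReal_nonneg m₁ v₁
  have hpdf2nn : ∀ x, 0 ≤ gaussianPDFReal m₂ v₂ x := gaussianPDFReal_nonneg m₂ v₂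
  -- express g s' and g s as pdf integrals
  have hgs' : g s' = ∫ x, gaussianPDFReal m₁ v₁ x * f x := by
    rw [hg s', my_integral_gaussianReal _ hv₁]
  have hgs : g s = ∫ w, gaussianPDFReal (m₁ + m₂) (v₁ + v₂) w * f w := by
    rw [hg s, my_integral_gaussianReal _ (by rw [hvsum]; simp [hv₁]), hmsum, hvsum]
  -- exponential moment of pdf2 is 1
  have hexp2 : ∫ y, Real.exp y * gaussianPDFReal m₂ v₂ y = 1 := by
    have h0 : m₂ + (v₂ : ℝ) / 2 = 0 := by rw [hm₂, hv₂coe]; ring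
    rw [integral_exp_mul_pdf _ hv₂, h0, Real.exp_zero]
  -- inner integrand integrability
  have hinner_int : ∀ x : ℝ, Integrable (fun y => f (y + x) * gaussianPDFReal m₂ v₂ y) := by
    intro x
    exact (integrable_gaussianPDFReal m₂ v₂).bdd_mul
      ((hfm.comp (measurable_id.add_const x)).aestronglyMeasurable)
      (ae_of_all _ fun y => hfnorm (y + x))
  -- Jensen step
  have hjensen : ∀ x : ℝ, f x ≤ ∫ y, f (y + x) * gaussianPDFReal m₂ v₂ y := by
    intro x
    set c := l * Real.exp x with hc
    have hcpos : 0 < c := by positivity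
    have key : ∀ y, (1/(1+c) + c/(1+c)^2) * gaussianPDFReal m₂ v₂ y
        + (-(c/(1+c)^2)) * (Real.exp y * gaussianPDFReal m₂ v₂ y)
        ≤ f (y + x) * gaussianPDFReal m₂ v₂ y := by
      intro y
      have ht : 0 < c * Real.exp y := by positivity
      have hfyx : f (y + x) = 1 / (1 + c * Real.exp y) := by
        simp only [hf, hc]; rw [Real.exp_add]; ring_nf
      have hJ := jensen_pointwise hcpos ht
      calc (1/(1+c) + c/(1+c)^2) * gaussianPDFReal m₂ v₂ y
            + (-(c/(1+c)^2)) * (Real.exp y * gaussianPDFReal m₂ v₂ y)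
          = (1/(1+c) + (c - c * Real.exp y)/(1+c)^2) * gaussianPDFReal m₂ v₂ y := by ring
        _ ≤ (1 / (1 + c * Real.exp y)) * gaussianPDFReal m₂ v₂ y :=
            mul_le_mul_of_nonneg_right hJ (hpdf2nn y)
        _ = f (y + x) * gaussianPDFReal m₂ v₂ y := by rw [hfyx]
    have hI1 : Integrable (fun y => (1/(1+c) + c/(1+c)^2) * gaussianPDFReal m₂ v₂ y) :=
      (integrable_gaussianPDFReal m₂ v₂).const_mul _
    have hI2 : Integrable (fun y =>
        (-(c/(1+c)^2)) * (Real.exp y * gaussianPDFReal m₂ v₂ y)) :=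
      (integrable_exp_mul_pdf m₂ hv₂).const_mul _
    have hLint : Integrable (fun y => (1/(1+c) + c/(1+c)^2) * gaussianPDFReal m₂ v₂ y
        + (-(c/(1+c)^2)) * (Real.exp y * gaussianPDFReal m₂ v₂ y)) := hI1.add hI2
    have hmono := integral_mono hLint (hinner_int x) key
    have hLval : ∫ y, ((1/(1+c) + c/(1+c)^2) * gaussianPDFReal m₂ v₂ y
        + (-(c/(1+c)^2)) * (Real.exp y * gaussianPDFReal m₂ v₂ y)) = f x := by
      rw [integral_add hI1 hI2, integral_const_mul, integral_const_mul,
        integral_gaussianPDFReal_eq_one _ hv₂, hexp2]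
      simp only [hf, hc]
      ring
    rw [hLval] at hmono
    exact hmono
  -- Fubini setup
  set F : ℝ → ℝ → ℝ :=
    fun x w => (gaussianPDFReal m₁ v₁ x * gaussianPDFReal m₂ v₂ (w - x)) * f w with hF
  have hFmeas : AEStronglyMeasurable (Function.uncurry F)
      ((volume : Measure ℝ).prod volume) := by
    apply Measurable.aestronglyMeasurable
    exact (((measurable_gaussianPDFReal m₁ v₁).comp measurable_fst).mul
      ((measurable_gaussianPDFReal m₂ v₂).comp (measurable_snd.sub measurable_fst))).mul
      (hfm.comp measurable_snd)
  have hFx_int : ∀ x : ℝ, Integrable (fun w => F x w) := by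
    intro x
    have h3 : Integrable (fun w => f w * gaussianPDFReal m₂ v₂ (w - x)) :=
      ((integrable_gaussianPDFReal m₂ v₂).comp_sub_right x).bdd_mul
        hfm.aestronglyMeasurable (ae_of_all _ fun w => hfnorm w)
    have heq : (fun w => F x w)
        = fun w => gaussianPDFReal m₁ v₁ x * (f w * gaussianPDFReal m₂ v₂ (w - x)) := by
      funext w; simp only [hF]; ring
    rw [heq]; exact h3.const_mul _
  have hFw_bound : ∀ x : ℝ, ∫ w, ‖F x w‖ ≤ gaussianPDFReal m₁ v₁ x := by
    intro x
    have h2 : Integrable (fun w => gaussianPDFReal m₁ v₁ x * gaussianPDFReal m₂ v₂ (w - x)) :=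
      ((integrable_gaussianPDFReal m₂ v₂).comp_sub_right x).const_mul _
    have hptw : ∀ w, ‖F x w‖ ≤ gaussianPDFReal m₁ v₁ x * gaussianPDFReal m₂ v₂ (w - x) := by
      intro w
      have hnn : 0 ≤ (gaussianPDFReal m₁ v₁ x * gaussianPDFReal m₂ v₂ (w - x)) :=
        mul_nonneg (hpdf1nn x) (hpdf2nn _)
      rw [Real.norm_eq_abs, abs_of_nonneg (mul_nonneg hnn (hfpos w).le)]
      exact mul_le_of_le_one_right hnn (hfle w)
    calc ∫ w, ‖F x w‖
        ≤ ∫ w, gaussianPDFReal m₁ v₁ x * gaussianPDFReal m₂ v₂ (w - x) :=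
          integral_mono (hFx_int x).norm h2 hptw
      _ = gaussianPDFReal m₁ v₁ x * ∫ w, gaussianPDFReal m₂ v₂ (w - x) := integral_const_mul _ _
      _ = gaussianPDFReal m₁ v₁ x := by
          rw [integral_sub_right_eq_self (gaussianPDFReal m₂ v₂) x,
            integral_gaussianPDFReal_eq_one _ hv₂, mul_one]
  have hFint : Integrable (Function.uncurry F) ((volume : Measure ℝ).prod volume) := by
    rw [integrable_prod_iff hFmeas]
    refine ⟨ae_of_all _ hFx_int, ?_⟩
    refine Integrable.mono (integrable_gaussianPDFReal m₁ v₁)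
      hFmeas.norm.integral_prod_right' (ae_of_all _ fun x => ?_)
    rw [Real.norm_eq_abs, abs_of_nonneg (integral_nonneg fun w => norm_nonneg _),
      Real.norm_eq_abs, abs_of_nonneg (hpdf1nn x)]
    exact hFw_bound x
  -- per-x inner integral
  have e2 : ∀ x, (∫ w, F x w)
      = gaussianPDFReal m₁ v₁ x * ∫ y, f (y + x) * gaussianPDFReal m₂ v₂ y := by
    intro x
    have heq : ∀ w, F x w
        = gaussianPDFReal m₁ v₁ x
          * ((fun y => f (y + x) * gaussianPDFReal m₂ v₂ y) (w - x)) := by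
      intro w
      have hw : w - x + x = w := by ring
      simp only [hF, hw]; ring
    simp_rw [heq]
    rw [integral_const_mul,
      integral_sub_right_eq_self (fun y => f (y + x) * gaussianPDFReal m₂ v₂ y) x]
  -- identify g s with iterated integral
  have key1 : g s = ∫ x, gaussianPDFReal m₁ v₁ x
      * ∫ y, f (y + x) * gaussianPDFReal m₂ v₂ y := by
    rw [hgs]
    have e1 : ∀ w, gaussianPDFReal (m₁ + m₂) (v₁ + v₂) w * f w = ∫ x, F x w := by
      intro w
      rw [← pdf_conv m₁ m₂ hv₁ hv₂ w, ← integral_mul_const]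
    simp_rw [e1, ← e2]
    exact (integral_integral_swap hFint).symm
  -- conclude
  rw [hgs', key1]
  have hRint : Integrable (fun x => gaussianPDFReal m₁ v₁ x
      * ∫ y, f (y + x) * gaussianPDFReal m₂ v₂ y) := by
    have := hFint.integral_prod_left
    simpa only [Function.uncurry_apply_pair, e2] using this
  have hLint2 : Integrable (fun x => gaussianPDFReal m₁ v₁ x * f x) := by
    have heq : (fun x => gaussianPDFReal m₁ v₁ x * f x)
        = fun x => f x * gaussianPDFReal m₁ v₁ x := by funext x; ring
    rw [heq]
    exact (integrable_gaussianPDFReal m₁ v₁).bdd_mul hfm.aestronglyMeasurable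
      (ae_of_all _ hfnorm)
  exact integral_mono hLint2 hRint fun x =>
    mul_le_mul_of_nonneg_left (hjensen x) (hpdf1nn x)
end

section
/- Let π₁, π₂ > 0 with π₁ + π₂ = 1, a = 1/(π₁π₂²), and for s > 0 let W ~ N(−as/2, as). Define g(s) = π₁·E[1/(1 + π₂(e^W − 1))] − π₁. Then as s → 0⁺, g(s) = s + ((1 − 6π₁π₂)/(2π₁π₂²)) s² + ((1 − 24π₁π₂ + 90π₁²π₂²)/(6π₁²π₂⁴)) s³ + O(s⁴). -/
open MeasureTheory ProbabilityTheory Filter Topology Asymptotics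
open scoped NNReal ENNReal

set_option maxHeartbeats 4000000
set_option maxRecDepth 100000


lemma err_bound {x : ℝ} (h0 : 0 ≤ x) (h1 : x ≤ 1) :
    |Real.exp x - (1 + x + x^2/2 + x^3/6)| ≤ x^4 := by
  have h := Real.exp_bound (x := x) (by rw [abs_of_nonneg h0]; exact h1) (n := 4) (by norm_num)
  have hsum : ∑ m ∈ Finset.range 4, x ^ m / (Nat.factorial m) = 1 + x + x^2/2 + x^3/6 := by
    simp [Finset.sum_range_succ, Nat.factorial]
  rw [hsum, abs_of_nonneg h0] at h
  have : x ^ 4 * ((4:ℕ).succ / ((Nat.factorial 4 : ℝ) * (4:ℕ))) ≤ x^4 := by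
    norm_num [Nat.factorial]
    nlinarith [pow_nonneg h0 4]
  linarith

lemma gaussianPDFReal_mul_exp (t μ : ℝ) (v : ℝ≥0) (x : ℝ) :
    gaussianPDFReal μ v x * Real.exp (t * x)
      = Real.exp (t*μ + t^2*v/2) * gaussianPDFReal (μ + t*v) v x := by
  rcases eq_or_ne v 0 with rfl | hv
  · simp [gaussianPDFReal_zero_var]
  have hv' : (0:ℝ) < (v:ℝ) := by positivity
  simp only [gaussianPDFReal]
  have hexp : Real.exp (-(x-μ)^2/(2*(v:ℝ)) + t*x)
      = Real.exp (t*μ+t^2*(v:ℝ)/2) * Real.exp (-(x-(μ+t*(v:ℝ)))^2/(2*(v:ℝ))) := by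
    rw [← Real.exp_add]
    congr 1
    field_simp
    ring
  rw [mul_assoc, ← Real.exp_add, hexp]
  ring

lemma integrable_exp_gaussian (t μ : ℝ) {v : ℝ≥0} (hv : v ≠ 0) :
    Integrable (fun x => Real.exp (t * x)) (gaussianReal μ v) := by
  rw [gaussianReal_of_var_ne_zero μ hv]
  have hmeas : Measurable fun x => Real.toNNReal (gaussianPDFReal μ v x) :=
    (measurable_gaussianPDFReal μ v).real_toNNReal
  have hd : (gaussianPDF μ v) = fun x => ((Real.toNNReal (gaussianPDFReal μ v x) : ℝ≥0) : ℝ≥0∞) := rfl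
  rw [hd, integrable_withDensity_iff_integrable_smul hmeas]
  have heq : (fun x => (Real.toNNReal (gaussianPDFReal μ v x) : ℝ≥0) • Real.exp (t*x))
      = fun x => Real.exp (t*μ + t^2*v/2) * gaussianPDFReal (μ + t*v) v x := by
    funext x
    rw [NNReal.smul_def, smul_eq_mul, Real.coe_toNNReal _ (gaussianPDFReal_nonneg μ v x),
      gaussianPDFReal_mul_exp]
  rw [heq]
  exact (integrable_gaussianPDFReal _ _).const_mul _

lemma integral_exp_gaussian (t μ : ℝ) {v : ℝ≥0} (hv : v ≠ 0) :
    ∫ x, Real.exp (t * x) ∂(gaussianReal μ v) = Real.exp (t*μ + t^2*v/2) := by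
  rw [gaussianReal_of_var_ne_zero μ hv]
  have hmeas : Measurable fun x => Real.toNNReal (gaussianPDFReal μ v x) :=
    (measurable_gaussianPDFReal μ v).real_toNNReal
  have hd : (gaussianPDF μ v) = fun x => ((Real.toNNReal (gaussianPDFReal μ v x) : ℝ≥0) : ℝ≥0∞) := rfl
  rw [hd, integral_withDensity_eq_integral_smul hmeas]
  have heq : ∀ x, (Real.toNNReal (gaussianPDFReal μ v x) : ℝ≥0) • Real.exp (t*x)
      = Real.exp (t*μ + t^2*v/2) * gaussianPDFReal (μ + t*v) v x := fun x => by
    rw [NNReal.smul_def, smul_eq_mul, Real.coe_toNNReal _ (gaussianPDFReal_nonneg μ v x),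
      gaussianPDFReal_mul_exp]
  simp_rw [heq]
  rw [MeasureTheory.integral_const_mul, integral_gaussianPDFReal_eq_one _ hv, mul_one]

theorem g_taylor_expansion (π₁ π₂ a : ℝ) (hπ₁ : 0 < π₁) (hπ₂ : 0 < π₂)
    (hsum : π₁ + π₂ = 1) (ha : a = 1 / (π₁ * π₂^2))
    (g : ℝ → ℝ)
    (hg : ∀ s, g s = π₁ * (∫ w, 1 / (1 + π₂ * (Real.exp w - 1))
        ∂(gaussianReal (-(a*s)/2) (Real.toNNReal (a*s)))) - π₁) :
    (fun s => g s - (s + ((1 - 6*π₁*π₂) / (2*π₁*π₂^2)) * s^2 +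
        ((1 - 24*π₁*π₂ + 90*π₁^2*π₂^2) / (6*π₁^2*π₂^4)) * s^3))
      =O[𝓝[>] (0:ℝ)] (fun s => s^4) := by
  have hπ₂1 : π₂ < 1 := by linarith
  have hπ₁1 : π₁ ≤ 1 := by linarith
  have ha0 : 0 < a := by rw [ha]; positivity
  rw [Asymptotics.isBigO_iff]
  refine ⟨1000000000 * a^4, ?_⟩
  filter_upwards [Ioo_mem_nhdsGT_of_mem
    (Set.left_mem_Ico.mpr (by positivity : (0:ℝ) < 1/(28*a)))] with s hsIoo
  obtain ⟨hs0, hs1⟩ := hsIoo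
  have hgs := hg s
  have h28 : 28*(a*s) ≤ 1 := by
    rw [lt_div_iff₀ (by positivity : (0:ℝ) < 28*a)] at hs1
    nlinarith
  have hvnn0 : Real.toNNReal (a*s) ≠ 0 := by
    rw [ne_eq, Real.toNNReal_eq_zero]
    push_neg
    positivity
  have hva : ((Real.toNNReal (a*s)) : ℝ) = a*s := Real.coe_toNNReal _ (by positivity)
  set μs := gaussianReal (-(a*s)/2) (Real.toNNReal (a*s)) with hμs
  set e : ℕ → ℝ := fun m => Real.exp (a*s*((m:ℝ)^2-(m:ℝ))/2) with he
  -- moments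
  have hintP : ∀ k : ℕ, Integrable (fun x => (Real.exp x)^k) μs := by
    intro k
    rw [hμs]
    exact (integrable_exp_gaussian (k:ℝ) (-(a*s)/2) hvnn0).congr
      (MeasureTheory.ae_of_all _ fun x => Real.exp_nat_mul x k)
  have hmomP : ∀ k : ℕ, ∫ x, (Real.exp x)^k ∂μs = e k := by
    intro k
    rw [hμs]
    have h1 : ∫ x, (Real.exp x)^k ∂(gaussianReal (-(a*s)/2) (Real.toNNReal (a*s)))
        = ∫ x, Real.exp ((k:ℝ)*x) ∂(gaussianReal (-(a*s)/2) (Real.toNNReal (a*s))) :=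
      MeasureTheory.integral_congr_ae
        (MeasureTheory.ae_of_all _ fun x => (Real.exp_nat_mul x k).symm)
    rw [h1, integral_exp_gaussian _ _ hvnn0]
    simp only [he]
    rw [hva]
    congr 1
    ring
  -- binomial expansion
  have hsub : ∀ n : ℕ, (fun w => (Real.exp w - 1)^n)
      = (fun w => ∑ m ∈ Finset.range (n+1),
          ((-1:ℝ)^(m+n) * ((n.choose m : ℕ) : ℝ)) * (Real.exp w)^m) := by
    intro n
    funext w
    rw [sub_pow]
    refine Finset.sum_congr rfl fun m _ => by ring
  have hsubint : ∀ n : ℕ, Integrable (fun w => (Real.exp w - 1)^n) μs := by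
    intro n
    rw [hsub n]
    exact MeasureTheory.integrable_finset_sum _ fun m _ => (hintP m).const_mul _
  have hsubval : ∀ n : ℕ, ∫ w, (Real.exp w - 1)^n ∂μs
      = ∑ m ∈ Finset.range (n+1), ((-1:ℝ)^(m+n) * ((n.choose m : ℕ) : ℝ)) * e m := by
    intro n
    rw [hsub n, MeasureTheory.integral_finset_sum _ fun m _ => (hintP m).const_mul _]
    refine Finset.sum_congr rfl fun m _ => ?_
    rw [MeasureTheory.integral_const_mul, hmomP m]
  -- positivity of denominator
  have hD : ∀ w : ℝ, 0 < 1 + π₂ * (Real.exp w - 1) := by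
    intro w
    nlinarith [Real.exp_pos w]
  have hDge : ∀ w : ℝ, π₁ ≤ 1 + π₂ * (Real.exp w - 1) := by
    intro w
    nlinarith [Real.exp_pos w]
  -- pointwise decomposition
  have hpt : ∀ w : ℝ, 1 / (1 + π₂ * (Real.exp w - 1))
      = (∑ n ∈ Finset.range (7+1), (-π₂)^n * (Real.exp w - 1)^n)
        + π₂^8 * ((Real.exp w - 1)^8 * (1 / (1 + π₂ * (Real.exp w - 1)))) := by
    intro w
    have hDw := (hD w).ne'
    simp only [Finset.sum_range_succ, Finset.sum_range_zero]
    field_simp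
    ring
  have hIF : Integrable (fun w => ∑ n ∈ Finset.range (7+1), (-π₂)^n * (Real.exp w - 1)^n) μs :=
    MeasureTheory.integrable_finset_sum _ fun n _ => (hsubint n).const_mul _
  have hRcont : Continuous (fun w => (Real.exp w - 1)^8 * (1 / (1 + π₂ * (Real.exp w - 1)))) := by
    apply Continuous.mul
    · fun_prop
    · exact continuous_const.div (by fun_prop) fun w => (hD w).ne'
  have hRbound : ∀ w : ℝ, ‖(Real.exp w - 1)^8 * (1 / (1 + π₂ * (Real.exp w - 1)))‖
      ≤ (1/π₁) * (Real.exp w - 1)^8 := by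
    intro w
    have hDw := hD w
    have h8 : (0:ℝ) ≤ (Real.exp w - 1)^8 := by positivity
    have hpos : 0 < 1 / (1 + π₂ * (Real.exp w - 1)) := one_div_pos.mpr hDw
    rw [Real.norm_eq_abs, abs_of_nonneg (mul_nonneg h8 hpos.le)]
    have hle : 1 / (1 + π₂ * (Real.exp w - 1)) ≤ 1/π₁ :=
      one_div_le_one_div_of_le hπ₁ (hDge w)
    nlinarith [mul_le_mul_of_nonneg_left hle h8]
  have hRint : Integrable (fun w => (Real.exp w - 1)^8 * (1 / (1 + π₂ * (Real.exp w - 1)))) μs :=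
    MeasureTheory.Integrable.mono' ((hsubint 8).const_mul (1/π₁))
      hRcont.aestronglyMeasurable (MeasureTheory.ae_of_all _ hRbound)
  set Rint : ℝ := ∫ w, (Real.exp w - 1)^8 * (1 / (1 + π₂ * (Real.exp w - 1))) ∂μs with hRintdef
  have hR0 : 0 ≤ Rint := by
    rw [hRintdef]
    exact MeasureTheory.integral_nonneg fun w =>
      mul_nonneg (by positivity) (one_div_pos.mpr (hD w)).le
  have hR1 : Rint ≤ (1/π₁) * (∑ m ∈ Finset.range (8+1),
      ((-1:ℝ)^(m+8) * (((8:ℕ).choose m : ℕ) : ℝ)) * e m) := by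
    rw [hRintdef, ← hsubval 8, ← MeasureTheory.integral_const_mul]
    exact MeasureTheory.integral_mono hRint ((hsubint 8).const_mul (1/π₁))
      fun w => (le_abs_self _).trans ((Real.norm_eq_abs _) ▸ hRbound w)
  -- integral identity
  have hIeq : (∫ w, 1 / (1 + π₂ * (Real.exp w - 1)) ∂μs)
      = (∑ n ∈ Finset.range (7+1), (-π₂)^n * ∑ m ∈ Finset.range (n+1),
          ((-1:ℝ)^(m+n) * ((n.choose m : ℕ) : ℝ)) * e m) + π₂^8 * Rint := by
    calc (∫ w, 1 / (1 + π₂ * (Real.exp w - 1)) ∂μs)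
        = ∫ w, ((∑ n ∈ Finset.range (7+1), (-π₂)^n * (Real.exp w - 1)^n)
            + π₂^8 * ((Real.exp w - 1)^8 * (1 / (1 + π₂ * (Real.exp w - 1))))) ∂μs :=
          MeasureTheory.integral_congr_ae (MeasureTheory.ae_of_all _ hpt)
      _ = (∑ n ∈ Finset.range (7+1), (-π₂)^n * ∑ m ∈ Finset.range (n+1),
            ((-1:ℝ)^(m+n) * ((n.choose m : ℕ) : ℝ)) * e m) + π₂^8 * Rint := by
          rw [MeasureTheory.integral_add hIF (hRint.const_mul _),
            MeasureTheory.integral_const_mul,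
            MeasureTheory.integral_finset_sum _ (fun n _ => (hsubint n).const_mul _)]
          congr 1
          refine Finset.sum_congr rfl fun n _ => ?_
          rw [MeasureTheory.integral_const_mul, hsubval n]
  have hgs2 : g s = π₁ * ((∑ n ∈ Finset.range (7+1), (-π₂)^n * ∑ m ∈ Finset.range (n+1),
      ((-1:ℝ)^(m+n) * ((n.choose m : ℕ) : ℝ)) * e m) + π₂^8 * Rint) - π₁ := by
    rw [hgs, hIeq]
  -- Taylor decomposition of the exponentials
  have hw : (0:ℝ) < a*s := mul_pos ha0 hs0
  obtain ⟨E0, hE0, hE0b⟩ : ∃ E : ℝ, e 0 = (1 + (0*(a*s)) + (0*(a*s))^2/2 + (0*(a*s))^3/6) + E ∧ |E| ≤ 614656*(a*s)^4 := by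
    have hx0 : (0:ℝ) ≤ (0*(a*s)) := mul_nonneg (by norm_num) hw.le
    have hx1 : (0*(a*s)) ≤ 1 := by linarith only [h28, hw]
    have heq : e 0 = Real.exp (0*(a*s)) := by
      simp only [he]
      congr 1
      push_cast
      ring
    refine ⟨e 0 - (1 + (0*(a*s)) + (0*(a*s))^2/2 + (0*(a*s))^3/6), by ring, ?_⟩
    rw [heq]
    have hb := err_bound hx0 hx1
    have h4 : ((0*(a*s)))^4 ≤ 614656*(a*s)^4 := by
      rw [mul_pow]
      exact mul_le_mul_of_nonneg_right (by norm_num) (pow_nonneg hw.le 4)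
    calc |Real.exp (0*(a*s)) - (1 + (0*(a*s)) + (0*(a*s))^2/2 + (0*(a*s))^3/6)| ≤ ((0*(a*s)))^4 := hb
      _ ≤ 614656*(a*s)^4 := h4
  obtain ⟨E1, hE1, hE1b⟩ : ∃ E : ℝ, e 1 = (1 + (0*(a*s)) + (0*(a*s))^2/2 + (0*(a*s))^3/6) + E ∧ |E| ≤ 614656*(a*s)^4 := by
    have hx0 : (0:ℝ) ≤ (0*(a*s)) := mul_nonneg (by norm_num) hw.le
    have hx1 : (0*(a*s)) ≤ 1 := by linarith only [h28, hw]
    have heq : e 1 = Real.exp (0*(a*s)) := by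
      simp only [he]
      congr 1
      push_cast
      ring
    refine ⟨e 1 - (1 + (0*(a*s)) + (0*(a*s))^2/2 + (0*(a*s))^3/6), by ring, ?_⟩
    rw [heq]
    have hb := err_bound hx0 hx1
    have h4 : ((0*(a*s)))^4 ≤ 614656*(a*s)^4 := by
      rw [mul_pow]
      exact mul_le_mul_of_nonneg_right (by norm_num) (pow_nonneg hw.le 4)
    calc |Real.exp (0*(a*s)) - (1 + (0*(a*s)) + (0*(a*s))^2/2 + (0*(a*s))^3/6)| ≤ ((0*(a*s)))^4 := hb
      _ ≤ 614656*(a*s)^4 := h4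
  obtain ⟨E2, hE2, hE2b⟩ : ∃ E : ℝ, e 2 = (1 + (1*(a*s)) + (1*(a*s))^2/2 + (1*(a*s))^3/6) + E ∧ |E| ≤ 614656*(a*s)^4 := by
    have hx0 : (0:ℝ) ≤ (1*(a*s)) := mul_nonneg (by norm_num) hw.le
    have hx1 : (1*(a*s)) ≤ 1 := by linarith only [h28, hw]
    have heq : e 2 = Real.exp (1*(a*s)) := by
      simp only [he]
      congr 1
      push_cast
      ring
    refine ⟨e 2 - (1 + (1*(a*s)) + (1*(a*s))^2/2 + (1*(a*s))^3/6), by ring, ?_⟩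
    rw [heq]
    have hb := err_bound hx0 hx1
    have h4 : ((1*(a*s)))^4 ≤ 614656*(a*s)^4 := by
      rw [mul_pow]
      exact mul_le_mul_of_nonneg_right (by norm_num) (pow_nonneg hw.le 4)
    calc |Real.exp (1*(a*s)) - (1 + (1*(a*s)) + (1*(a*s))^2/2 + (1*(a*s))^3/6)| ≤ ((1*(a*s)))^4 := hb
      _ ≤ 614656*(a*s)^4 := h4
  obtain ⟨E3, hE3, hE3b⟩ : ∃ E : ℝ, e 3 = (1 + (3*(a*s)) + (3*(a*s))^2/2 + (3*(a*s))^3/6) + E ∧ |E| ≤ 614656*(a*s)^4 := by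
    have hx0 : (0:ℝ) ≤ (3*(a*s)) := mul_nonneg (by norm_num) hw.le
    have hx1 : (3*(a*s)) ≤ 1 := by linarith only [h28, hw]
    have heq : e 3 = Real.exp (3*(a*s)) := by
      simp only [he]
      congr 1
      push_cast
      ring
    refine ⟨e 3 - (1 + (3*(a*s)) + (3*(a*s))^2/2 + (3*(a*s))^3/6), by ring, ?_⟩
    rw [heq]
    have hb := err_bound hx0 hx1
    have h4 : ((3*(a*s)))^4 ≤ 614656*(a*s)^4 := by
      rw [mul_pow]
      exact mul_le_mul_of_nonneg_right (by norm_num) (pow_nonneg hw.le 4)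
    calc |Real.exp (3*(a*s)) - (1 + (3*(a*s)) + (3*(a*s))^2/2 + (3*(a*s))^3/6)| ≤ ((3*(a*s)))^4 := hb
      _ ≤ 614656*(a*s)^4 := h4
  obtain ⟨E4, hE4, hE4b⟩ : ∃ E : ℝ, e 4 = (1 + (6*(a*s)) + (6*(a*s))^2/2 + (6*(a*s))^3/6) + E ∧ |E| ≤ 614656*(a*s)^4 := by
    have hx0 : (0:ℝ) ≤ (6*(a*s)) := mul_nonneg (by norm_num) hw.le
    have hx1 : (6*(a*s)) ≤ 1 := by linarith only [h28, hw]
    have heq : e 4 = Real.exp (6*(a*s)) := by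
      simp only [he]
      congr 1
      push_cast
      ring
    refine ⟨e 4 - (1 + (6*(a*s)) + (6*(a*s))^2/2 + (6*(a*s))^3/6), by ring, ?_⟩
    rw [heq]
    have hb := err_bound hx0 hx1
    have h4 : ((6*(a*s)))^4 ≤ 614656*(a*s)^4 := by
      rw [mul_pow]
      exact mul_le_mul_of_nonneg_right (by norm_num) (pow_nonneg hw.le 4)
    calc |Real.exp (6*(a*s)) - (1 + (6*(a*s)) + (6*(a*s))^2/2 + (6*(a*s))^3/6)| ≤ ((6*(a*s)))^4 := hb
      _ ≤ 614656*(a*s)^4 := h4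
  obtain ⟨E5, hE5, hE5b⟩ : ∃ E : ℝ, e 5 = (1 + (10*(a*s)) + (10*(a*s))^2/2 + (10*(a*s))^3/6) + E ∧ |E| ≤ 614656*(a*s)^4 := by
    have hx0 : (0:ℝ) ≤ (10*(a*s)) := mul_nonneg (by norm_num) hw.le
    have hx1 : (10*(a*s)) ≤ 1 := by linarith only [h28, hw]
    have heq : e 5 = Real.exp (10*(a*s)) := by
      simp only [he]
      congr 1
      push_cast
      ring
    refine ⟨e 5 - (1 + (10*(a*s)) + (10*(a*s))^2/2 + (10*(a*s))^3/6), by ring, ?_⟩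
    rw [heq]
    have hb := err_bound hx0 hx1
    have h4 : ((10*(a*s)))^4 ≤ 614656*(a*s)^4 := by
      rw [mul_pow]
      exact mul_le_mul_of_nonneg_right (by norm_num) (pow_nonneg hw.le 4)
    calc |Real.exp (10*(a*s)) - (1 + (10*(a*s)) + (10*(a*s))^2/2 + (10*(a*s))^3/6)| ≤ ((10*(a*s)))^4 := hb
      _ ≤ 614656*(a*s)^4 := h4
  obtain ⟨E6, hE6, hE6b⟩ : ∃ E : ℝ, e 6 = (1 + (15*(a*s)) + (15*(a*s))^2/2 + (15*(a*s))^3/6) + E ∧ |E| ≤ 614656*(a*s)^4 := by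
    have hx0 : (0:ℝ) ≤ (15*(a*s)) := mul_nonneg (by norm_num) hw.le
    have hx1 : (15*(a*s)) ≤ 1 := by linarith only [h28, hw]
    have heq : e 6 = Real.exp (15*(a*s)) := by
      simp only [he]
      congr 1
      push_cast
      ring
    refine ⟨e 6 - (1 + (15*(a*s)) + (15*(a*s))^2/2 + (15*(a*s))^3/6), by ring, ?_⟩
    rw [heq]
    have hb := err_bound hx0 hx1
    have h4 : ((15*(a*s)))^4 ≤ 614656*(a*s)^4 := by
      rw [mul_pow]
      exact mul_le_mul_of_nonneg_right (by norm_num) (pow_nonneg hw.le 4)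
    calc |Real.exp (15*(a*s)) - (1 + (15*(a*s)) + (15*(a*s))^2/2 + (15*(a*s))^3/6)| ≤ ((15*(a*s)))^4 := hb
      _ ≤ 614656*(a*s)^4 := h4
  obtain ⟨E7, hE7, hE7b⟩ : ∃ E : ℝ, e 7 = (1 + (21*(a*s)) + (21*(a*s))^2/2 + (21*(a*s))^3/6) + E ∧ |E| ≤ 614656*(a*s)^4 := by
    have hx0 : (0:ℝ) ≤ (21*(a*s)) := mul_nonneg (by norm_num) hw.le
    have hx1 : (21*(a*s)) ≤ 1 := by linarith only [h28, hw]
    have heq : e 7 = Real.exp (21*(a*s)) := by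
      simp only [he]
      congr 1
      push_cast
      ring
    refine ⟨e 7 - (1 + (21*(a*s)) + (21*(a*s))^2/2 + (21*(a*s))^3/6), by ring, ?_⟩
    rw [heq]
    have hb := err_bound hx0 hx1
    have h4 : ((21*(a*s)))^4 ≤ 614656*(a*s)^4 := by
      rw [mul_pow]
      exact mul_le_mul_of_nonneg_right (by norm_num) (pow_nonneg hw.le 4)
    calc |Real.exp (21*(a*s)) - (1 + (21*(a*s)) + (21*(a*s))^2/2 + (21*(a*s))^3/6)| ≤ ((21*(a*s)))^4 := hb
      _ ≤ 614656*(a*s)^4 := h4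
  obtain ⟨E8, hE8, hE8b⟩ : ∃ E : ℝ, e 8 = (1 + (28*(a*s)) + (28*(a*s))^2/2 + (28*(a*s))^3/6) + E ∧ |E| ≤ 614656*(a*s)^4 := by
    have hx0 : (0:ℝ) ≤ (28*(a*s)) := mul_nonneg (by norm_num) hw.le
    have hx1 : (28*(a*s)) ≤ 1 := by linarith only [h28, hw]
    have heq : e 8 = Real.exp (28*(a*s)) := by
      simp only [he]
      congr 1
      push_cast
      ring
    refine ⟨e 8 - (1 + (28*(a*s)) + (28*(a*s))^2/2 + (28*(a*s))^3/6), by ring, ?_⟩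
    rw [heq]
    have hb := err_bound hx0 hx1
    have h4 : ((28*(a*s)))^4 ≤ 614656*(a*s)^4 := by
      rw [mul_pow]
      exact mul_le_mul_of_nonneg_right (by norm_num) (pow_nonneg hw.le 4)
    calc |Real.exp (28*(a*s)) - (1 + (28*(a*s)) + (28*(a*s))^2/2 + (28*(a*s))^3/6)| ≤ ((28*(a*s)))^4 := hb
      _ ≤ 614656*(a*s)^4 := h4
  -- helper facts
  have hπ₁0 : π₁ ≠ 0 := ne_of_gt hπ₁
  have hπ₂0 : π₂ ≠ 0 := ne_of_gt hπ₂
  have hπ₁eq : π₁ = 1 - π₂ := by linarith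
  have hseq : s = (a*s)*(π₁*π₂^2) := by
    rw [ha]
    field_simp
  have hP2 : ((1-6*π₁*π₂)/(2*π₁*π₂^2))*s^2 = (1-6*π₁*π₂)*π₁*π₂^2*(a*s)^2/2 := by
    calc ((1-6*π₁*π₂)/(2*π₁*π₂^2))*s^2 = ((1-6*π₁*π₂)/(2*π₁*π₂^2))*((a*s)*(π₁*π₂^2))^2 := by
          rw [← hseq]
      _ = (1-6*π₁*π₂)*π₁*π₂^2*(a*s)^2/2 := by field_simp
  have hP3 : ((1-24*π₁*π₂+90*π₁^2*π₂^2)/(6*π₁^2*π₂^4))*s^3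
      = (1-24*π₁*π₂+90*π₁^2*π₂^2)*π₁*π₂^2*(a*s)^3/6 := by
    calc ((1-24*π₁*π₂+90*π₁^2*π₂^2)/(6*π₁^2*π₂^4))*s^3
        = ((1-24*π₁*π₂+90*π₁^2*π₂^2)/(6*π₁^2*π₂^4))*((a*s)*(π₁*π₂^2))^3 := by rw [← hseq]
      _ = (1-24*π₁*π₂+90*π₁^2*π₂^2)*π₁*π₂^2*(a*s)^3/6 := by field_simp
  -- the key algebraic identity
  have hkey : g s - (s + ((1 - 6*π₁*π₂) / (2*π₁*π₂^2)) * s^2 +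
        ((1 - 24*π₁*π₂ + 90*π₁^2*π₂^2) / (6*π₁^2*π₂^4)) * s^3)
      = π₁*(((1*π₂^0 + 1*π₂^1 + 1*π₂^2 + 1*π₂^3 + 1*π₂^4 + 1*π₂^5 + 1*π₂^6 + 1*π₂^7))*E0 + (-(1*π₂^1 + 2*π₂^2 + 3*π₂^3 + 4*π₂^4 + 5*π₂^5 + 6*π₂^6 + 7*π₂^7))*E1 + ((1*π₂^2 + 3*π₂^3 + 6*π₂^4 + 10*π₂^5 + 15*π₂^6 + 21*π₂^7))*E2 + (-(1*π₂^3 + 4*π₂^4 + 10*π₂^5 + 20*π₂^6 + 35*π₂^7))*E3 + ((1*π₂^4 + 5*π₂^5 + 15*π₂^6 + 35*π₂^7))*E4 + (-(1*π₂^5 + 6*π₂^6 + 21*π₂^7))*E5 + ((1*π₂^6 + 7*π₂^7))*E6 + (-(1*π₂^7))*E7) + π₁*(π₂^8*Rint) := by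
    rw [hgs2, hP2, hP3]
    simp only [Finset.sum_range_succ, Finset.sum_range_zero]
    norm_num [Nat.choose]
    rw [hE0, hE1, hE2, hE3, hE4, hE5, hE6, hE7]
    rw [hπ₁eq]
    generalize hV : a * s = V
    rw [show s = V*((1-π₂)*π₂^2) from by rw [← hV, ← hπ₁eq]; exact hseq]
    ring
  -- value of the 8th moment
  have hM8 : (∑ m ∈ Finset.range (8+1), ((-1:ℝ)^(m+8) * (((8:ℕ).choose m : ℕ) : ℝ)) * e m)
      = E0 - 8*E1 + 28*E2 - 56*E3 + 70*E4 - 56*E5 + 28*E6 - 8*E7 + E8 := by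
    simp only [Finset.sum_range_succ, Finset.sum_range_zero]
    norm_num [Nat.choose]
    rw [hE0, hE1, hE2, hE3, hE4, hE5, hE6, hE7, hE8]
    ring
  rw [hM8] at hR1
  have hR2 : π₁ * Rint ≤ E0 - 8*E1 + 28*E2 - 56*E3 + 70*E4 - 56*E5 + 28*E6 - 8*E7 + E8 := by
    have h := mul_le_mul_of_nonneg_left hR1 hπ₁.le
    have h2 : π₁ * ((1/π₁) * (E0 - 8*E1 + 28*E2 - 56*E3 + 70*E4 - 56*E5 + 28*E6 - 8*E7 + E8)) = E0 - 8*E1 + 28*E2 - 56*E3 + 70*E4 - 56*E5 + 28*E6 - 8*E7 + E8 := by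
      field_simp
    linarith only [h, h2]
  -- bounds on coefficients times errors
  have hppow : ∀ n : ℕ, 0 ≤ π₂^n ∧ π₂^n ≤ 1 :=
    fun n => ⟨pow_nonneg hπ₂.le n, pow_le_one₀ hπ₂.le hπ₂1.le⟩
  have hc0 : |(((1*π₂^0 + 1*π₂^1 + 1*π₂^2 + 1*π₂^3 + 1*π₂^4 + 1*π₂^5 + 1*π₂^6 + 1*π₂^7)))*E0| ≤ 100*(614656*(a*s)^4) := by
    rw [abs_mul]
    have hcb : |(((1*π₂^0 + 1*π₂^1 + 1*π₂^2 + 1*π₂^3 + 1*π₂^4 + 1*π₂^5 + 1*π₂^6 + 1*π₂^7)))| ≤ 100 := by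
      rw [abs_le]
      constructor <;> linarith only [(hppow 0).1, (hppow 0).2, (hppow 1).1, (hppow 1).2, (hppow 2).1, (hppow 2).2, (hppow 3).1, (hppow 3).2, (hppow 4).1, (hppow 4).2, (hppow 5).1, (hppow 5).2, (hppow 6).1, (hppow 6).2, (hppow 7).1, (hppow 7).2]
    exact mul_le_mul hcb hE0b (abs_nonneg _) (by norm_num)
  have hc0' := abs_le.mp hc0
  have hc1 : |((-(1*π₂^1 + 2*π₂^2 + 3*π₂^3 + 4*π₂^4 + 5*π₂^5 + 6*π₂^6 + 7*π₂^7)))*E1| ≤ 100*(614656*(a*s)^4) := by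
    rw [abs_mul]
    have hcb : |((-(1*π₂^1 + 2*π₂^2 + 3*π₂^3 + 4*π₂^4 + 5*π₂^5 + 6*π₂^6 + 7*π₂^7)))| ≤ 100 := by
      rw [abs_le]
      constructor <;> linarith only [(hppow 0).1, (hppow 0).2, (hppow 1).1, (hppow 1).2, (hppow 2).1, (hppow 2).2, (hppow 3).1, (hppow 3).2, (hppow 4).1, (hppow 4).2, (hppow 5).1, (hppow 5).2, (hppow 6).1, (hppow 6).2, (hppow 7).1, (hppow 7).2]
    exact mul_le_mul hcb hE1b (abs_nonneg _) (by norm_num)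
  have hc1' := abs_le.mp hc1
  have hc2 : |(((1*π₂^2 + 3*π₂^3 + 6*π₂^4 + 10*π₂^5 + 15*π₂^6 + 21*π₂^7)))*E2| ≤ 100*(614656*(a*s)^4) := by
    rw [abs_mul]
    have hcb : |(((1*π₂^2 + 3*π₂^3 + 6*π₂^4 + 10*π₂^5 + 15*π₂^6 + 21*π₂^7)))| ≤ 100 := by
      rw [abs_le]
      constructor <;> linarith only [(hppow 0).1, (hppow 0).2, (hppow 1).1, (hppow 1).2, (hppow 2).1, (hppow 2).2, (hppow 3).1, (hppow 3).2, (hppow 4).1, (hppow 4).2, (hppow 5).1, (hppow 5).2, (hppow 6).1, (hppow 6).2, (hppow 7).1, (hppow 7).2]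
    exact mul_le_mul hcb hE2b (abs_nonneg _) (by norm_num)
  have hc2' := abs_le.mp hc2
  have hc3 : |((-(1*π₂^3 + 4*π₂^4 + 10*π₂^5 + 20*π₂^6 + 35*π₂^7)))*E3| ≤ 100*(614656*(a*s)^4) := by
    rw [abs_mul]
    have hcb : |((-(1*π₂^3 + 4*π₂^4 + 10*π₂^5 + 20*π₂^6 + 35*π₂^7)))| ≤ 100 := by
      rw [abs_le]
      constructor <;> linarith only [(hppow 0).1, (hppow 0).2, (hppow 1).1, (hppow 1).2, (hppow 2).1, (hppow 2).2, (hppow 3).1, (hppow 3).2, (hppow 4).1, (hppow 4).2, (hppow 5).1, (hppow 5).2, (hppow 6).1, (hppow 6).2, (hppow 7).1, (hppow 7).2]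
    exact mul_le_mul hcb hE3b (abs_nonneg _) (by norm_num)
  have hc3' := abs_le.mp hc3
  have hc4 : |(((1*π₂^4 + 5*π₂^5 + 15*π₂^6 + 35*π₂^7)))*E4| ≤ 100*(614656*(a*s)^4) := by
    rw [abs_mul]
    have hcb : |(((1*π₂^4 + 5*π₂^5 + 15*π₂^6 + 35*π₂^7)))| ≤ 100 := by
      rw [abs_le]
      constructor <;> linarith only [(hppow 0).1, (hppow 0).2, (hppow 1).1, (hppow 1).2, (hppow 2).1, (hppow 2).2, (hppow 3).1, (hppow 3).2, (hppow 4).1, (hppow 4).2, (hppow 5).1, (hppow 5).2, (hppow 6).1, (hppow 6).2, (hppow 7).1, (hppow 7).2]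
    exact mul_le_mul hcb hE4b (abs_nonneg _) (by norm_num)
  have hc4' := abs_le.mp hc4
  have hc5 : |((-(1*π₂^5 + 6*π₂^6 + 21*π₂^7)))*E5| ≤ 100*(614656*(a*s)^4) := by
    rw [abs_mul]
    have hcb : |((-(1*π₂^5 + 6*π₂^6 + 21*π₂^7)))| ≤ 100 := by
      rw [abs_le]
      constructor <;> linarith only [(hppow 0).1, (hppow 0).2, (hppow 1).1, (hppow 1).2, (hppow 2).1, (hppow 2).2, (hppow 3).1, (hppow 3).2, (hppow 4).1, (hppow 4).2, (hppow 5).1, (hppow 5).2, (hppow 6).1, (hppow 6).2, (hppow 7).1, (hppow 7).2]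
    exact mul_le_mul hcb hE5b (abs_nonneg _) (by norm_num)
  have hc5' := abs_le.mp hc5
  have hc6 : |(((1*π₂^6 + 7*π₂^7)))*E6| ≤ 100*(614656*(a*s)^4) := by
    rw [abs_mul]
    have hcb : |(((1*π₂^6 + 7*π₂^7)))| ≤ 100 := by
      rw [abs_le]
      constructor <;> linarith only [(hppow 0).1, (hppow 0).2, (hppow 1).1, (hppow 1).2, (hppow 2).1, (hppow 2).2, (hppow 3).1, (hppow 3).2, (hppow 4).1, (hppow 4).2, (hppow 5).1, (hppow 5).2, (hppow 6).1, (hppow 6).2, (hppow 7).1, (hppow 7).2]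
    exact mul_le_mul hcb hE6b (abs_nonneg _) (by norm_num)
  have hc6' := abs_le.mp hc6
  have hc7 : |((-(1*π₂^7)))*E7| ≤ 100*(614656*(a*s)^4) := by
    rw [abs_mul]
    have hcb : |((-(1*π₂^7)))| ≤ 100 := by
      rw [abs_le]
      constructor <;> linarith only [(hppow 0).1, (hppow 0).2, (hppow 1).1, (hppow 1).2, (hppow 2).1, (hppow 2).2, (hppow 3).1, (hppow 3).2, (hppow 4).1, (hppow 4).2, (hppow 5).1, (hppow 5).2, (hppow 6).1, (hppow 6).2, (hppow 7).1, (hppow 7).2]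
    exact mul_le_mul hcb hE7b (abs_nonneg _) (by norm_num)
  have hc7' := abs_le.mp hc7

  have hM8b : |E0 - 8*E1 + 28*E2 - 56*E3 + 70*E4 - 56*E5 + 28*E6 - 8*E7 + E8| ≤ 256*(614656*(a*s)^4) := by
    have h0 := abs_le.mp hE0b
    have h1 := abs_le.mp hE1b
    have h2 := abs_le.mp hE2b
    have h3 := abs_le.mp hE3b
    have h4 := abs_le.mp hE4b
    have h5 := abs_le.mp hE5b
    have h6 := abs_le.mp hE6b
    have h7 := abs_le.mp hE7b
    have h8 := abs_le.mp hE8b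
    rw [abs_le]
    constructor <;> linarith only [h0.1, h0.2, h1.1, h1.2, h2.1, h2.2, h3.1, h3.2, h4.1, h4.2,
      h5.1, h5.2, h6.1, h6.2, h7.1, h7.2, h8.1, h8.2]
  have hrem0 : 0 ≤ π₁*(π₂^8*Rint) := by positivity
  have hrem1 : π₁*(π₂^8*Rint) ≤ 256*(614656*(a*s)^4) := by
    have hpw := hppow 8
    have hM8b' := abs_le.mp hM8b
    nlinarith only [hR2, hM8b'.2,
      mul_nonneg (sub_nonneg.mpr hpw.2) (mul_nonneg hπ₁.le hR0)]
  have hSb : |π₁*(((1*π₂^0 + 1*π₂^1 + 1*π₂^2 + 1*π₂^3 + 1*π₂^4 + 1*π₂^5 + 1*π₂^6 + 1*π₂^7))*E0 + (-(1*π₂^1 + 2*π₂^2 + 3*π₂^3 + 4*π₂^4 + 5*π₂^5 + 6*π₂^6 + 7*π₂^7))*E1 + ((1*π₂^2 + 3*π₂^3 + 6*π₂^4 + 10*π₂^5 + 15*π₂^6 + 21*π₂^7))*E2 + (-(1*π₂^3 + 4*π₂^4 + 10*π₂^5 + 20*π₂^6 + 35*π₂^7))*E3 + ((1*π₂^4 +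 5*π₂^5 + 15*π₂^6 + 35*π₂^7))*E4 + (-(1*π₂^5 + 6*π₂^6 + 21*π₂^7))*E5 + ((1*π₂^6 + 7*π₂^7))*E6 + (-(1*π₂^7))*E7)| ≤ 800*(614656*(a*s)^4) := by
    have hS : |((1*π₂^0 + 1*π₂^1 + 1*π₂^2 + 1*π₂^3 + 1*π₂^4 + 1*π₂^5 + 1*π₂^6 + 1*π₂^7))*E0 + (-(1*π₂^1 + 2*π₂^2 + 3*π₂^3 + 4*π₂^4 + 5*π₂^5 + 6*π₂^6 + 7*π₂^7))*E1 + ((1*π₂^2 + 3*π₂^3 + 6*π₂^4 + 10*π₂^5 + 15*π₂^6 + 21*π₂^7))*E2 + (-(1*π₂^3 + 4*π₂^4 + 10*π₂^5 + 20*π₂^6 + 35*π₂^7))*E3 + ((1*π₂^4 + 5*π₂^5 + 15*π₂^6 + 35*π₂^7))*E4 + (-(1*π₂^5 + 6*π₂^6 + 21*π₂^7))*E5 + ((1*π₂^6 + 7*π₂^7))*E6 + (-(1*π₂^7))*E7| ≤ 800*(614656*(a*s)^4) := by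
      rw [abs_le]
      constructor <;> linarith only [hc0'.1, hc0'.2, hc1'.1, hc1'.2, hc2'.1, hc2'.2, hc3'.1, hc3'.2, hc4'.1, hc4'.2, hc5'.1, hc5'.2, hc6'.1, hc6'.2, hc7'.1, hc7'.2]
    rw [abs_mul, abs_of_pos hπ₁]
    nlinarith only [hS, hπ₁1, mul_nonneg (sub_nonneg.mpr hπ₁1) (abs_nonneg (((1*π₂^0 + 1*π₂^1 + 1*π₂^2 + 1*π₂^3 + 1*π₂^4 + 1*π₂^5 + 1*π₂^6 + 1*π₂^7))*E0 + (-(1*π₂^1 + 2*π₂^2 + 3*π₂^3 + 4*π₂^4 + 5*π₂^5 + 6*π₂^6 + 7*π₂^7))*E1 + ((1*π₂^2 + 3*π₂^3 + 6*π₂^4 + 10*π₂^5 + 15*π₂^6 + 21*π₂^7))*E2 + (-(1*π₂^3 + 4*π₂^4 + 10*π₂^5 + 20*π₂^6 + 35*π₂^7))*E3 + ((1*π₂^4 + 5*π₂^5 + 15*π₂^6 + 35*π₂^7))*E4 + (-(1*π₂^5 + 6*π₂^6 + 21*π₂^7))*E5 + ((1*π₂^6 + 7*π₂^7))*E6 +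 (-(1*π₂^7))*E7))]
  have hfinal : |g s - (s + ((1 - 6*π₁*π₂) / (2*π₁*π₂^2)) * s^2 +
        ((1 - 24*π₁*π₂ + 90*π₁^2*π₂^2) / (6*π₁^2*π₂^4)) * s^3)|
      ≤ 1056*(614656*(a*s)^4) := by
    rw [hkey]
    have h1 := abs_le.mp hSb
    rw [abs_le]
    constructor <;> linarith only [h1.1, h1.2, hrem0, hrem1]
  calc ‖g s - (s + ((1 - 6*π₁*π₂) / (2*π₁*π₂^2)) * s^2 +
        ((1 - 24*π₁*π₂ + 90*π₁^2*π₂^2) / (6*π₁^2*π₂^4)) * s^3)‖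
      = |g s - (s + ((1 - 6*π₁*π₂) / (2*π₁*π₂^2)) * s^2 +
        ((1 - 24*π₁*π₂ + 90*π₁^2*π₂^2) / (6*π₁^2*π₂^4)) * s^3)| := rfl
    _ ≤ 1056*(614656*(a*s)^4) := hfinal
    _ ≤ 1000000000 * a^4 * ‖s^4‖ := by
        rw [Real.norm_eq_abs, abs_of_nonneg (by positivity : (0:ℝ) ≤ s^4)]
        nlinarith only [mul_pos (pow_pos ha0 4) (pow_pos hs0 4)]
end

section
/- Let ε > 0, N a nonnegative integer, γ ∈ (0,1), δ > 0 with ε ≤ min(π₂γ^N, δγ), and let (x_n) be a sequence of nonnegative reals with x_n ≥ π₂γ^n for n ≤ N. Assume: (i) if x_n ≥ γ^{-1}ε then x_{n+1} ≥ γ x_n; (ii) if ε ≤ x_n ≤ γ^{-1}ε ≤ δ and n ≥ N then x_{n+1} ≥ x_n. Then x_n ≥ ε for all n ≥ 0. -/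
theorem reconstruction_induction (π₂ γ δ ε : ℝ) (N : ℕ)
    (hπ₂ : 0 < π₂) (hγ0 : 0 < γ) (hγ1 : γ < 1) (hδ : 0 < δ) (hε : 0 < ε)
    (hεmin : ε ≤ min (π₂ * γ ^ N) (δ * γ))
    (x : ℕ → ℝ) (hx : ∀ n, 0 ≤ x n)
    (hinit : ∀ n ≤ N, π₂ * γ ^ n ≤ x n)
    (hi : ∀ n, γ⁻¹ * ε ≤ x n → γ * x n ≤ x (n + 1))
    (hii : ∀ n, N ≤ n → ε ≤ x n → x n ≤ γ⁻¹ * ε → γ⁻¹ * ε ≤ δ → x n ≤ x (n + 1)) :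
    ∀ n, ε ≤ x n := by
  have h1 : ε ≤ π₂ * γ ^ N := le_trans hεmin (min_le_left _ _)
  have h2 : γ⁻¹ * ε ≤ δ := by
    rw [inv_mul_le_iff₀ hγ0]
    linarith [le_trans hεmin (min_le_right _ _)]
  have hle : ∀ n ≤ N, ε ≤ x n := by
    intro n hn
    refine le_trans (le_trans h1 ?_) (hinit n hn)
    exact mul_le_mul_of_nonneg_left (pow_le_pow_of_le_one hγ0.le hγ1.le hn) hπ₂.le
  intro n
  induction n with
  | zero => exact hle 0 (Nat.zero_le _)
  | succ n ih =>
    rcases le_or_gt (n + 1) N with h | h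
    · exact hle _ h
    · have hN : N ≤ n := Nat.lt_succ_iff.mp h
      rcases le_or_gt (γ⁻¹ * ε) (x n) with hc | hc
      · have := hi n hc
        have : γ * (γ⁻¹ * ε) ≤ x (n + 1) :=
          le_trans (mul_le_mul_of_nonneg_left hc hγ0.le) this
        rwa [mul_inv_cancel_left₀ hγ0.ne'] at this
      · exact le_trans ih (hii n hN ih hc.le h2)
end
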